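/- The three points T₁ = (ut, 0), T₂ = (0, vw), and T₃ = ( ut(1-w)/(w+t-2wt), vw(1-t)/(w+t-2wt) ) all satisfy the equation (vw)²x² + (ut)²y² + 2wt(2w+2t-2wt-1)uv·xy - 2ut(vw)²x - 2wv(ut)²y + (uvwt)² = 0. -/

import Mathlib

theorem stmt_6 (u v w t : ℝ) (hu : 0 < u) (hv : 0 < v)
    (hw : 0 < w) (hw1 : w < 1) (ht : 0 < t) (ht1 : t < 1)
    (H : ℝ → ℝ → ℝ)
    (hH : ∀ x y, H x y = (v*w)^2 * x^2 + (u*t)^2 * y^2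
        + 2 * w * t * (2*w + 2*t - 2*w*t - 1) * u * v * x * y
        - 2 * u * t * (v*w)^2 * x - 2 * w * v * (u*t)^2 * y + (u*v*w*t)^2) :
    H (u*t) 0 = 0 ∧ H 0 (v*w) = 0 ∧
    H (u*t*(1-w) / (w + t - 2*w*t)) (v*w*(1-t) / (w + t - 2*w*t)) = 0 := by
  have hd : w + t - 2*w*t ≠ 0 := by nlinarith
  refine ⟨by rw [hH]; ring, by rw [hH]; ring, ?_⟩
  rw [hH]
  have hd' : w + t - w * t * 2 ≠ 0 := by convert hd using 1; ring
  field_simp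
  ring
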